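/- Substitution identity for the piecing-out resolvent: let Φ_i, u_i ≥ 0 for i ∈ ℕ, fix j ∈ ℕ, and set Rκ_i = Φ_i + A·u_i where A = μ_j u_j/(κ + S) with S = α μ(u) > 0 and κ > 0. Let π be a probability measure on ℕ ∪ {∂} with π(u) < (κ+S)/κ, let c = κ/(κ+S) and v_i = c·u_i. Then R̃_i := Rκ_i + (π(Rκ)/(1 − π(v)))·v_i equals Φ_i + u_i · (κ π(Φ) + μ_j u_j)/(κ − κ π(u) + S), provided all series π(Φ) = Σ_k Φ_k π_k and π(u) = Σ_k u_k π_k converge (with Φ_∂ = u_∂ = 0). -/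

import Mathlib

/-- Substitution identity for the piecing-out resolvent: with
`Rκ_i = Φ_i + A u_i`, `A = μ_j u_j/(κ + S)`, `S = α μ(u) > 0`, `κ > 0`,
`c = κ/(κ + S)`, `v_i = c u_i`, and a probability measure `π` on `ℕ ∪ {∂}`
(with `Φ_∂ = u_∂ = 0`, so sums over `k ∈ ℕ` suffice) satisfying
`π(u) < (κ + S)/κ`, one has for every `i`
`Rκ_i + (π(Rκ)/(1 - π(v))) v_i = Φ_i + u_i (κ π(Φ) + μ_j u_j)/(κ - κ π(u) + S)`. -/
theorem piecing_out_substitution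
    (Φ u π : ℕ → ℝ) (mjuj κ S : ℝ)
    (hΦ : ∀ k, 0 ≤ Φ k) (hu : ∀ k, 0 ≤ u k) (hπ : ∀ k, 0 ≤ π k)
    (hmj : 0 ≤ mjuj) (hκ : 0 < κ) (hS : 0 < S)
    (hΦπ : Summable (fun k => Φ k * π k)) (huπ : Summable (fun k => u k * π k))
    (hπu : (∑' k : ℕ, u k * π k) < (κ + S) / κ) :
    ∀ i : ℕ,
      (Φ i + (mjuj / (κ + S)) * u i) +
        ((∑' k : ℕ, (Φ k + (mjuj / (κ + S)) * u k) * π k) /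
          (1 - ∑' k : ℕ, (κ / (κ + S)) * u k * π k)) * ((κ / (κ + S)) * u i) =
      Φ i + u i * ((κ * (∑' k : ℕ, Φ k * π k) + mjuj) /
        (κ - κ * (∑' k : ℕ, u k * π k) + S)) := by
  intro i
  set P := ∑' k : ℕ, Φ k * π k with hP
  set U := ∑' k : ℕ, u k * π k with hU
  have hκS : (0:ℝ) < κ + S := by linarith
  have h1 : (∑' k : ℕ, (Φ k + (mjuj / (κ + S)) * u k) * π k)
      = P + (mjuj / (κ + S)) * U := by
    have : ∀ k, (Φ k + (mjuj / (κ + S)) * u k) * π k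
        = Φ k * π k + (mjuj / (κ + S)) * (u k * π k) := by intro k; ring
    simp_rw [this]
    rw [Summable.tsum_add hΦπ (huπ.mul_left _), tsum_mul_left]
  have h2 : (∑' k : ℕ, (κ / (κ + S)) * u k * π k) = (κ / (κ + S)) * U := by
    simp_rw [mul_assoc]
    exact tsum_mul_left
  rw [h1, h2]
  have hUκ : κ * U < κ + S := by
    rw [lt_div_iff₀ hκ] at hπu; linarith [hπu]
  have hd2 : κ - κ * U + S ≠ 0 := by intro h; nlinarith
  have key : 1 - κ / (κ + S) * U = (κ - κ * U + S) / (κ + S) := by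
    field_simp; ring
  rw [key]
  rw [div_div_eq_mul_div]
  have hd3 : κ * (1 - U) + S ≠ 0 := by intro h; apply hd2; linarith
  field_simp
  ring
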